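/- Let H₀ be a skew-symmetric operator. Then there exists a skew-self-adjoint extension H ⊇ H₀ if and only if dim ker(1 − H₀*) = dim ker(1 + H₀*), where the dimensions are taken as Hilbert space dimensions (cardinals). -/

import Mathlib

open scoped InnerProductSpace
open LinearPMap

namespace Stmt7

variable {ℋ : Type*} [NormedAddCommGroup ℋ] [InnerProductSpace ℂ ℋ] [CompleteSpace ℋ]

/-- Range of `1 - B`. -/
noncomputable def rm (B : ℋ →ₗ.[ℂ] ℋ) : Submodule ℂ ℋ :=
  LinearMap.range (B.domain.subtype - B.toFun)

/-- Range of `1 + B`. -/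
noncomputable def rp (B : ℋ →ₗ.[ℂ] ℋ) : Submodule ℂ ℋ :=
  LinearMap.range (B.domain.subtype + B.toFun)

lemma mem_rm {B : ℋ →ₗ.[ℂ] ℋ} {z : ℋ} : z ∈ rm B ↔ ∃ x : B.domain, (x : ℋ) - B x = z := by
  simp [rm, LinearMap.mem_range, LinearMap.sub_apply, toFun_eq_coe]

lemma mem_rp {B : ℋ →ₗ.[ℂ] ℋ} {z : ℋ} : z ∈ rp B ↔ ∃ x : B.domain, (x : ℋ) + B x = z := by
  simp [rp, LinearMap.mem_range, LinearMap.add_apply, toFun_eq_coe]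

/-- Skew-symmetry as an inner-product identity. -/
def Skew (B : ℋ →ₗ.[ℂ] ℋ) : Prop :=
  ∀ x y : B.domain, ⟪B x, (y : ℋ)⟫_ℂ = -⟪(x : ℋ), B y⟫_ℂ

lemma skew_of_le_neg_adjoint {B : ℋ →ₗ.[ℂ] ℋ} (hd : Dense (B.domain : Set ℋ))
    (h : B ≤ -B.adjoint) : Skew B := by
  intro x y
  have hx : (x : ℋ) ∈ (-B.adjoint).domain := h.1 x.2
  have hval : B x = (-B.adjoint) ⟨(x : ℋ), hx⟩ := h.2 rfl
  have hneg : (-B.adjoint) ⟨(x : ℋ), hx⟩ = -(B.adjoint ⟨(x : ℋ), hx⟩) := rfl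
  rw [hval, hneg, inner_neg_left]
  congr 1
  exact (adjoint_isFormalAdjoint hd) ⟨(x : ℋ), hx⟩ y

lemma skew_re {B : ℋ →ₗ.[ℂ] ℋ} (hs : Skew B) (x : B.domain) :
    ⟪(x : ℋ), B x⟫_ℂ + ⟪B x, (x : ℋ)⟫_ℂ = 0 := by
  rw [hs x x]; ring

lemma norm_sub_sq_skew {B : ℋ →ₗ.[ℂ] ℋ} (hs : Skew B) (x : B.domain) :
    ‖(x : ℋ) - B x‖ ^ 2 = ‖(x : ℋ)‖ ^ 2 + ‖B x‖ ^ 2 := by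
  have := @norm_sub_sq ℂ _ _ _ _ (x : ℋ) (B x)
  have hre : RCLike.re ⟪(x : ℋ), B x⟫_ℂ = 0 := by
    have h2 := hs x x
    have h3 : ⟪(x : ℋ), B x⟫_ℂ = -(starRingEnd ℂ) ⟪(x : ℋ), B x⟫_ℂ := by
      have h4 : (starRingEnd ℂ) ⟪(x : ℋ), B x⟫_ℂ = ⟪B x, (x : ℋ)⟫_ℂ := inner_conj_symm _ _
      rw [h4, h2, neg_neg]
    have hre2 := congrArg Complex.re h3
    simp only [Complex.neg_re, Complex.conj_re] at hre2
    change (⟪(x : ℋ), B x⟫_ℂ).re = 0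
    linarith
  rw [this, hre]; ring

lemma norm_add_sq_skew {B : ℋ →ₗ.[ℂ] ℋ} (hs : Skew B) (x : B.domain) :
    ‖(x : ℋ) + B x‖ ^ 2 = ‖(x : ℋ)‖ ^ 2 + ‖B x‖ ^ 2 := by
  have := @norm_add_sq ℂ _ _ _ _ (x : ℋ) (B x)
  have hre : RCLike.re ⟪(x : ℋ), B x⟫_ℂ = 0 := by
    have h2 := hs x x
    have h3 : ⟪(x : ℋ), B x⟫_ℂ = -(starRingEnd ℂ) ⟪(x : ℋ), B x⟫_ℂ := by
      have h4 : (starRingEnd ℂ) ⟪(x : ℋ), B x⟫_ℂ = ⟪B x, (x : ℋ)⟫_ℂ := inner_conj_symm _ _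
      rw [h4, h2, neg_neg]
    have hre2 := congrArg Complex.re h3
    simp only [Complex.neg_re, Complex.conj_re] at hre2
    change (⟪(x : ℋ), B x⟫_ℂ).re = 0
    linarith
  rw [this, hre]; ring

lemma max_le_of_sq {u v w : ℝ} (hu : 0 ≤ u) (hv : 0 ≤ v) (hw : 0 ≤ w)
    (h : max u v ^ 2 ≤ w ^ 2) : max u v ≤ w := by
  have hm : 0 ≤ max u v := le_max_of_le_left hu
  nlinarith [le_max_left u v, le_max_right u v]

lemma isClosed_rm {B : ℋ →ₗ.[ℂ] ℋ} (hs : Skew B) (hc : B.IsClosed) :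
    IsClosed (rm B : Set ℋ) := by
  haveI : CompleteSpace B.graph := hc.completeSpace_coe
  set f : B.graph → ℋ := fun g => (g : ℋ × ℋ).1 - (g : ℋ × ℋ).2 with hf
  have key : ∀ g g' : B.graph, ∃ x : B.domain,
      (x : ℋ) = ((g : ℋ × ℋ) - (g' : ℋ × ℋ)).1 ∧ B x = ((g : ℋ × ℋ) - (g' : ℋ × ℋ)).2 := by
    intro g g'
    exact B.mem_graph_iff.mp (B.graph.sub_mem g.2 g'.2)
  have hdists : ∀ (g g' : B.graph) (x : B.domain),
      (x : ℋ) = ((g : ℋ × ℋ) - (g' : ℋ × ℋ)).1 → B x = ((g : ℋ × ℋ) - (g' : ℋ × ℋ)).2 →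
      dist g g' = max ‖(x : ℋ)‖ ‖B x‖ ∧ dist (f g) (f g') = ‖(x : ℋ) - B x‖ := by
    intro g g' x h1 h2
    constructor
    · rw [Subtype.dist_eq, Prod.dist_eq, dist_eq_norm, dist_eq_norm, ← Prod.fst_sub,
        ← Prod.snd_sub, ← h1, ← h2]
    · rw [dist_eq_norm, hf]
      simp only [Prod.fst_sub, Prod.snd_sub] at h1 h2
      rw [show ((g:ℋ×ℋ).1 - (g:ℋ×ℋ).2) - ((g':ℋ×ℋ).1 - (g':ℋ×ℋ).2)
          = ((g:ℋ×ℋ).1 - (g':ℋ×ℋ).1) - ((g:ℋ×ℋ).2 - (g':ℋ×ℋ).2) by abel, ← h1, ← h2]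
  have hrange : Set.range f = (rm B : Set ℋ) := by
    ext z
    constructor
    · rintro ⟨g, rfl⟩
      obtain ⟨x, hx1, hx2⟩ := B.mem_graph_iff.mp g.2
      exact mem_rm.mpr ⟨x, by rw [hf]; rw [hx1, hx2]⟩
    · intro hz
      obtain ⟨x, hx⟩ := mem_rm.mp hz
      exact ⟨⟨((x : ℋ), B x), B.mem_graph x⟩, hx⟩
  have hanti : AntilipschitzWith 1 f := by
    refine AntilipschitzWith.of_le_mul_dist fun g g' => ?_
    obtain ⟨x, hx1, hx2⟩ := key g g'
    obtain ⟨hd1, hd2⟩ := hdists g g' x hx1 hx2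
    rw [hd1, hd2, NNReal.coe_one, one_mul]
    refine max_le_of_sq (norm_nonneg _) (norm_nonneg _) (norm_nonneg _) ?_
    rw [norm_sub_sq_skew hs x]
    rcases max_cases ‖(x : ℋ)‖ ‖B x‖ with ⟨h1, _⟩ | ⟨h1, _⟩ <;> rw [h1] <;>
      nlinarith [sq_nonneg ‖(x : ℋ)‖, sq_nonneg ‖B x‖]
  have hlip : LipschitzWith 2 f := by
    refine LipschitzWith.of_dist_le_mul fun g g' => ?_
    obtain ⟨x, hx1, hx2⟩ := key g g'
    obtain ⟨hd1, hd2⟩ := hdists g g' x hx1 hx2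
    rw [hd1, hd2]
    have := norm_sub_le (x : ℋ) (B x)
    have h1 := le_max_left ‖(x : ℋ)‖ ‖B x‖
    have h2 := le_max_right ‖(x : ℋ)‖ ‖B x‖
    push_cast
    linarith
  rw [← hrange]
  exact hanti.isClosed_range hlip.uniformContinuous

lemma rp_eq_rm_neg (B : ℋ →ₗ.[ℂ] ℋ) : rp B = rm (-B) := by
  ext z
  rw [mem_rm, mem_rp]
  constructor
  · rintro ⟨x, hx⟩
    exact ⟨x, by rw [LinearPMap.neg_apply]; rw [← hx]; abel⟩
  · rintro ⟨x, hx⟩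
    exact ⟨x, by rw [LinearPMap.neg_apply] at hx; rw [← hx]; abel⟩

lemma skew_neg {B : ℋ →ₗ.[ℂ] ℋ} (hs : Skew B) : Skew (-B) := by
  intro x y
  rw [LinearPMap.neg_apply, LinearPMap.neg_apply, inner_neg_left, inner_neg_right, hs x y]

lemma isClosed_neg {B : ℋ →ₗ.[ℂ] ℋ} (hc : B.IsClosed) : (-B).IsClosed := by
  unfold LinearPMap.IsClosed at *
  rw [neg_graph]
  have : ((B.graph.map ((LinearMap.id : ℋ →ₗ[ℂ] ℋ).prodMap
      (-(LinearMap.id : ℋ →ₗ[ℂ] ℋ)))) : Set (ℋ × ℋ)) =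
      (Homeomorph.prodCongr (Homeomorph.refl ℋ) (Homeomorph.neg ℋ)) '' (B.graph : Set (ℋ × ℋ)) := by
    ext p
    simp [Submodule.mem_map, Set.mem_image]
  rw [this]
  exact (Homeomorph.prodCongr (Homeomorph.refl ℋ) (Homeomorph.neg ℋ)).isClosedMap _ hc

lemma isClosed_rp {B : ℋ →ₗ.[ℂ] ℋ} (hs : Skew B) (hc : B.IsClosed) :
    IsClosed (rp B : Set ℋ) := by
  rw [rp_eq_rm_neg]
  exact isClosed_rm (skew_neg hs) (isClosed_neg hc)

/-- Orthogonal complement of `ran(1-B)` is `ker(1 - B†)`. -/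
lemma mem_orth_rm_iff {B : ℋ →ₗ.[ℂ] ℋ} (hd : Dense (B.domain : Set ℋ)) {y : ℋ} :
    y ∈ (rm B)ᗮ ↔ ∃ hy : y ∈ B.adjoint.domain, B.adjoint ⟨y, hy⟩ = y := by
  constructor
  · intro h
    have h' : ∀ x : B.domain, ⟪(y : ℋ), (x : ℋ)⟫_ℂ = ⟪y, B x⟫_ℂ := by
      intro x
      have h0 : ⟪(x : ℋ) - B x, y⟫_ℂ = 0 :=
        (Submodule.mem_orthogonal _ _).mp h _ (mem_rm.mpr ⟨x, rfl⟩)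
      rw [inner_sub_left, sub_eq_zero] at h0
      have := congrArg (starRingEnd ℂ) h0
      rwa [inner_conj_symm, inner_conj_symm] at this
    have hy : y ∈ B.adjoint.domain := mem_adjoint_domain_of_exists y ⟨y, fun x => h' x⟩
    exact ⟨hy, adjoint_apply_eq hd ⟨y, hy⟩ fun x => h' x⟩
  · rintro ⟨hy, hval⟩
    rw [Submodule.mem_orthogonal]
    intro u hu
    obtain ⟨x, hx⟩ := mem_rm.mp hu
    have h1 : ⟪(y : ℋ), (x : ℋ)⟫_ℂ = ⟪y, B x⟫_ℂ := by
      conv_lhs => rw [← hval]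
      exact (adjoint_isFormalAdjoint hd) ⟨y, hy⟩ x
    have h2 := congrArg (starRingEnd ℂ) h1
    rw [inner_conj_symm, inner_conj_symm] at h2
    rw [← hx, inner_sub_left, h2, sub_self]

/-- Orthogonal complement of `ran(1+B)` is `ker(1 + B†)`. -/
lemma mem_orth_rp_iff {B : ℋ →ₗ.[ℂ] ℋ} (hd : Dense (B.domain : Set ℋ)) {y : ℋ} :
    y ∈ (rp B)ᗮ ↔ ∃ hy : y ∈ B.adjoint.domain, B.adjoint ⟨y, hy⟩ = -y := by
  constructor
  · intro h
    have h' : ∀ x : B.domain, ⟪(-y : ℋ), (x : ℋ)⟫_ℂ = ⟪y, B x⟫_ℂ := by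
      intro x
      have h0 : ⟪(x : ℋ) + B x, y⟫_ℂ = 0 :=
        (Submodule.mem_orthogonal _ _).mp h _ (mem_rp.mpr ⟨x, rfl⟩)
      rw [inner_add_left, add_eq_zero_iff_eq_neg] at h0
      have this2 : ⟪y, (x : ℋ)⟫_ℂ = -⟪y, B x⟫_ℂ := by
        rw [← inner_conj_symm, h0, _root_.map_neg, inner_conj_symm]
      rw [inner_neg_left, this2, neg_neg]
    have hy : y ∈ B.adjoint.domain := mem_adjoint_domain_of_exists y ⟨-y, fun x => h' x⟩
    exact ⟨hy, adjoint_apply_eq hd ⟨y, hy⟩ fun x => h' x⟩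
  · rintro ⟨hy, hval⟩
    rw [Submodule.mem_orthogonal]
    intro u hu
    obtain ⟨x, hx⟩ := mem_rp.mp hu
    have h1 : ⟪(-y : ℋ), (x : ℋ)⟫_ℂ = ⟪y, B x⟫_ℂ := by
      conv_lhs => rw [← hval]
      exact (adjoint_isFormalAdjoint hd) ⟨y, hy⟩ x
    have h2 := congrArg (starRingEnd ℂ) h1
    have h3 : (starRingEnd ℂ) ⟪(-y : ℋ), (x : ℋ)⟫_ℂ = ⟪(x : ℋ), -y⟫_ℂ := inner_conj_symm _ _
    have h4 : (starRingEnd ℂ) ⟪y, B x⟫_ℂ = ⟪B x, y⟫_ℂ := inner_conj_symm _ _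
    rw [h3, h4, inner_neg_right] at h2
    rw [← hx, inner_add_left, ← h2]
    ring

lemma fm_inj {B : ℋ →ₗ.[ℂ] ℋ} (hs : Skew B) :
    Function.Injective (B.domain.subtype - B.toFun) := by
  rw [← LinearMap.ker_eq_bot]
  rw [Submodule.eq_bot_iff]
  intro x hx
  rw [LinearMap.mem_ker, LinearMap.sub_apply] at hx
  have h0 : (x : ℋ) - B x = 0 := hx
  have h1 := norm_sub_sq_skew hs x
  rw [h0] at h1
  simp only [norm_zero] at h1
  have hx0 : ‖(x : ℋ)‖ = 0 := by nlinarith [sq_nonneg ‖(x:ℋ)‖, sq_nonneg ‖B x‖, norm_nonneg (x:ℋ), norm_nonneg (B x)]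
  have : (x : ℋ) = 0 := norm_eq_zero.mp hx0
  exact Subtype.ext this

lemma gp_inj {B : ℋ →ₗ.[ℂ] ℋ} (hs : Skew B) :
    Function.Injective (B.domain.subtype + B.toFun) := by
  rw [← LinearMap.ker_eq_bot]
  rw [Submodule.eq_bot_iff]
  intro x hx
  rw [LinearMap.mem_ker, LinearMap.add_apply] at hx
  have h0 : (x : ℋ) + B x = 0 := hx
  have h1 := norm_add_sq_skew hs x
  rw [h0] at h1
  simp only [norm_zero] at h1
  have hx0 : ‖(x : ℋ)‖ = 0 := by nlinarith [sq_nonneg ‖(x:ℋ)‖, sq_nonneg ‖B x‖, norm_nonneg (x:ℋ), norm_nonneg (B x)]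
  have : (x : ℋ) = 0 := norm_eq_zero.mp hx0
  exact Subtype.ext this

/-- The Cayley transform as an isometric isomorphism `ran(1-B) ≃ ran(1+B)`. -/
noncomputable def cay {B : ℋ →ₗ.[ℂ] ℋ} (hs : Skew B) : (rm B) ≃ₗᵢ[ℂ] (rp B) where
  toLinearEquiv :=
    ((LinearEquiv.ofInjective _ (fm_inj hs)).symm.trans (LinearEquiv.ofInjective _ (gp_inj hs)))
  norm_map' := by
    intro w
    set x := (LinearEquiv.ofInjective _ (fm_inj hs)).symm w with hx
    have hw : w = LinearEquiv.ofInjective _ (fm_inj hs) x := by rw [hx]; exact (LinearEquiv.apply_symm_apply _ w).symm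
    have hwcoe : (w : ℋ) = (x : ℋ) - B x := by
      rw [hw, LinearEquiv.ofInjective_apply, LinearMap.sub_apply]
      rfl
    have himg : ((((LinearEquiv.ofInjective _ (fm_inj hs)).symm.trans
        (LinearEquiv.ofInjective _ (gp_inj hs))) w : rp B) : ℋ) = (x : ℋ) + B x := by
      show ((LinearEquiv.ofInjective _ (gp_inj hs) x : rp B) : ℋ) = (x : ℋ) + B x
      rw [LinearEquiv.ofInjective_apply, LinearMap.add_apply]
      rfl
    show ‖((((LinearEquiv.ofInjective _ (fm_inj hs)).symm.trans
        (LinearEquiv.ofInjective _ (gp_inj hs))) w : rp B) : ℋ)‖ = ‖(w : ℋ)‖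
    rw [himg, hwcoe]
    have ha := norm_add_sq_skew hs x
    have hb := norm_sub_sq_skew hs x
    nlinarith [norm_nonneg ((x : ℋ) + B x), norm_nonneg ((x : ℋ) - B x)]

lemma cay_apply {B : ℋ →ₗ.[ℂ] ℋ} (hs : Skew B) (x : B.domain)
    (hmem : ((x : ℋ) - B x) ∈ rm B) :
    ((cay hs ⟨(x : ℋ) - B x, hmem⟩ : rp B) : ℋ) = (x : ℋ) + B x := by
  have he : (⟨(x : ℋ) - B x, hmem⟩ : rm B) = LinearEquiv.ofInjective _ (fm_inj hs) x := by
    apply Subtype.ext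
    rw [LinearEquiv.ofInjective_apply, LinearMap.sub_apply]
    rfl
  show (((LinearEquiv.ofInjective _ (fm_inj hs)).symm.trans
      (LinearEquiv.ofInjective _ (gp_inj hs))) ⟨(x : ℋ) - B x, hmem⟩ : rp B) = (x : ℋ) + B x
  have he2 : (LinearEquiv.ofInjective _ (fm_inj hs)).symm ⟨(x : ℋ) - B x, hmem⟩ = x :=
    (LinearEquiv.ofInjective _ (fm_inj hs)).symm_apply_eq.mpr he
  rw [LinearEquiv.trans_apply, he2, LinearEquiv.ofInjective_apply,
    LinearMap.add_apply]
  rfl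

/-- `ker(1 - B†)` is isometrically the orthogonal complement of `ran(1-B)`. -/
noncomputable def kerM (B : ℋ →ₗ.[ℂ] ℋ) (hd : Dense (B.domain : Set ℋ)) :
    (LinearMap.ker (B.adjoint.domain.subtype - B.adjoint.toFun)) ≃ₗᵢ[ℂ] ((rm B)ᗮ) where
  toLinearEquiv :=
    { toFun := fun u => ⟨((u : B.adjoint.domain) : ℋ), by
        refine (mem_orth_rm_iff hd).mpr ⟨(u : B.adjoint.domain).2, ?_⟩
        have h2 := u.2
        rw [LinearMap.mem_ker, LinearMap.sub_apply] at h2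
        have : ((u : B.adjoint.domain) : ℋ) - B.adjoint (u : B.adjoint.domain) = 0 := h2
        rw [sub_eq_zero] at this
        exact this.symm⟩
      map_add' := fun u v => rfl
      map_smul' := fun c u => rfl
      invFun := fun v => ⟨⟨(v : ℋ), ((mem_orth_rm_iff hd).mp v.2).choose⟩, by
        rw [LinearMap.mem_ker, LinearMap.sub_apply]
        have := ((mem_orth_rm_iff hd).mp v.2).choose_spec
        show ((v : ℋ)) - B.adjoint ⟨(v : ℋ), _⟩ = 0
        rw [this, sub_self]⟩
      left_inv := fun u => by apply Subtype.ext; apply Subtype.ext; rfl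
      right_inv := fun v => by apply Subtype.ext; rfl }
  norm_map' := fun u => rfl

/-- `ker(1 + B†)` is isometrically the orthogonal complement of `ran(1+B)`. -/
noncomputable def kerP (B : ℋ →ₗ.[ℂ] ℋ) (hd : Dense (B.domain : Set ℋ)) :
    (LinearMap.ker (B.adjoint.domain.subtype + B.adjoint.toFun)) ≃ₗᵢ[ℂ] ((rp B)ᗮ) where
  toLinearEquiv :=
    { toFun := fun u => ⟨((u : B.adjoint.domain) : ℋ), by
        refine (mem_orth_rp_iff hd).mpr ⟨(u : B.adjoint.domain).2, ?_⟩
        have h2 := u.2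
        rw [LinearMap.mem_ker, LinearMap.add_apply] at h2
        have : ((u : B.adjoint.domain) : ℋ) + B.adjoint (u : B.adjoint.domain) = 0 := h2
        have h3 : B.adjoint (u : B.adjoint.domain) = -((u : B.adjoint.domain) : ℋ) := by
          rw [← add_eq_zero_iff_eq_neg]
          rw [add_comm]
          exact this
        exact h3⟩
      map_add' := fun u v => rfl
      map_smul' := fun c u => rfl
      invFun := fun v => ⟨⟨(v : ℋ), ((mem_orth_rp_iff hd).mp v.2).choose⟩, by
        rw [LinearMap.mem_ker, LinearMap.add_apply]
        have := ((mem_orth_rp_iff hd).mp v.2).choose_spec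
        show ((v : ℋ)) + B.adjoint ⟨(v : ℋ), _⟩ = 0
        rw [this, add_neg_cancel]⟩
      left_inv := fun u => by apply Subtype.ext; apply Subtype.ext; rfl
      right_inv := fun v => by apply Subtype.ext; rfl }
  norm_map' := fun u => rfl

/-- Main construction: a unitary extending the Cayley transform of `B` yields a
skew-self-adjoint extension of `B`. -/
lemma construct {B : ℋ →ₗ.[ℂ] ℋ} (hd : Dense (B.domain : Set ℋ)) (U : ℋ ≃ₗᵢ[ℂ] ℋ)
    (hU : ∀ x : B.domain, U ((x : ℋ) - B x) = (x : ℋ) + B x) :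
    ∃ H : ℋ →ₗ.[ℂ] ℋ, Dense (H.domain : Set ℋ) ∧ B ≤ H ∧ H = -H.adjoint := by
  classical
  set Ulin : ℋ →ₗ[ℂ] ℋ := U.toLinearEquiv.toLinearMap with hUlin
  set r : ℋ →ₗ[ℂ] ℋ := (2⁻¹ : ℂ) • (LinearMap.id + Ulin) with hr
  set s : ℋ →ₗ[ℂ] ℋ := (2⁻¹ : ℂ) • (Ulin - LinearMap.id) with hsdef
  have hrapp : ∀ y : ℋ, r y = (2⁻¹ : ℂ) • (y + U y) := fun y => rfl
  have hsapp : ∀ y : ℋ, s y = (2⁻¹ : ℂ) • (U y - y) := fun y => rfl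
  have hUU : ∀ a b : ℋ, ⟪U a, U b⟫_ℂ = ⟪a, b⟫_ℂ := fun a b => U.inner_map_map a b
  have htwo : (2⁻¹ : ℂ) * 2 = 1 := by norm_num
  -- r of (x - Bx) is x, s of (x - Bx) is Bx
  have hrB : ∀ x : B.domain, r ((x : ℋ) - B x) = x := by
    intro x
    rw [hrapp, hU x]
    have : ((x : ℋ) - B x) + ((x : ℋ) + B x) = (2 : ℂ) • (x : ℋ) := by
      rw [two_smul]; abel
    rw [this, smul_smul, htwo, one_smul]
  have hsB : ∀ x : B.domain, s ((x : ℋ) - B x) = B x := by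
    intro x
    rw [hsapp, hU x]
    have : ((x : ℋ) + B x) - ((x : ℋ) - B x) = (2 : ℂ) • (B x : ℋ) := by
      rw [two_smul]; abel
    rw [this, smul_smul, htwo, one_smul]
  -- kernel of r is trivial
  have hker : ∀ y : ℋ, r y = 0 → y = 0 := by
    intro y hy
    rw [hrapp] at hy
    have hUy : U y = -y := by
      have h2 : y + U y = 0 := by
        have := congrArg (fun z => (2 : ℂ) • z) hy
        simpa [smul_smul] using this
      linear_combination (norm := abel) h2
    refine hd.eq_zero_of_inner_left ℂ fun v' hv' => ?_
    obtain ⟨v, rfl⟩ : ∃ v : B.domain, (v : ℋ) = v' := ⟨⟨v', hv'⟩, rfl⟩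
    have h3 : ⟪y, ((v : B.domain) : ℋ)⟫_ℂ = ⟪y, r (((v : B.domain) : ℋ) - B v)⟫_ℂ := by
      rw [hrB]
    rw [h3, hrapp, inner_smul_right, inner_add_right]
    have h4 : ⟪y, U (((v : B.domain) : ℋ) - B v)⟫_ℂ
        = -⟪y, ((v : B.domain) : ℋ) - B v⟫_ℂ := by
      have : ⟪y, U (((v : B.domain) : ℋ) - B v)⟫_ℂ
          = ⟪-(U y), U (((v : B.domain) : ℋ) - B v)⟫_ℂ := by rw [hUy, neg_neg]
      rw [this, inner_neg_left, hUU]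
    rw [h4]
    ring
  -- the graph and the operator H
  set G : Submodule ℂ (ℋ × ℋ) := LinearMap.range (r.prod s) with hG
  have hGv : ∀ p : ℋ × ℋ, p ∈ G → p.1 = 0 → p.2 = 0 := by
    rintro p ⟨y, rfl⟩ h1
    have : y = 0 := hker y h1
    simp [this]
  set H : ℋ →ₗ.[ℂ] ℋ := G.toLinearPMap with hH
  have hgraph : H.graph = G := Submodule.toLinearPMap_graph_eq G hGv
  have hmemG : ∀ y : ℋ, (r y, s y) ∈ G := fun y => ⟨y, rfl⟩
  have hdomH : ∀ y : ℋ, r y ∈ H.domain := by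
    intro y
    have : (r y, s y) ∈ H.graph := hgraph ▸ hmemG y
    exact H.mem_domain_of_mem_graph this
  have happ : ∀ (y : ℋ) (h : r y ∈ H.domain), H ⟨r y, h⟩ = s y := by
    intro y h
    have h1 : (r y, H ⟨r y, h⟩) ∈ H.graph := H.mem_graph ⟨r y, h⟩
    have h2 : (r y, s y) ∈ H.graph := hgraph ▸ hmemG y
    exact H.mem_graph_snd_inj h1 h2 rfl
  -- every element of the domain comes from r
  have happ' : ∀ (z : H.domain) (y' : ℋ), r y' = (z : ℋ) → H z = s y' := by
    intro z y' hzy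
    have h1 : ((z : ℋ), H z) ∈ H.graph := H.mem_graph z
    have h2 : (r y', s y') ∈ H.graph := hgraph ▸ hmemG y'
    exact H.mem_graph_snd_inj h1 h2 hzy.symm
  have hdom' : ∀ z : H.domain, ∃ y : ℋ, r y = (z : ℋ) ∧ s y = H z := by
    intro z
    have h1 : ((z : ℋ), H z) ∈ H.graph := H.mem_graph z
    rw [hgraph] at h1
    obtain ⟨y, hy⟩ := h1
    exact ⟨y, congrArg Prod.fst hy, congrArg Prod.snd hy⟩
  -- density of the domain
  have hBsub : (B.domain : Set ℋ) ⊆ (H.domain : Set ℋ) := by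
    intro a ha
    have := hdomH (a - B ⟨a, ha⟩)
    rwa [hrB ⟨a, ha⟩] at this
  have hdense' : Dense (H.domain : Set ℋ) := hd.mono hBsub
  -- H extends B
  have hBH : B ≤ H := by
    refine le_of_le_graph ?_
    intro p hp
    obtain ⟨x, hx1, hx2⟩ := B.mem_graph_iff.mp hp
    rw [hgraph]
    refine ⟨(x : ℋ) - B x, ?_⟩
    have : (r.prod s) ((x : ℋ) - B x) = (r ((x:ℋ) - B x), s ((x:ℋ) - B x)) := rfl
    rw [this, hrB, hsB, hx1, hx2]
  -- skew-symmetry of H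
  have hskewH : ∀ z w : H.domain, ⟪H z, (w : ℋ)⟫_ℂ = -⟪(z : ℋ), H w⟫_ℂ := by
    intro z w
    obtain ⟨y, hy1, hy2⟩ := hdom' z
    obtain ⟨v, hv1, hv2⟩ := hdom' w
    rw [← hy1, ← hy2, ← hv1, ← hv2, hrapp, hrapp, hsapp, hsapp]
    simp only [inner_smul_left, inner_smul_right, inner_add_left, inner_add_right,
      inner_sub_left, inner_sub_right, hUU]
    have hc : (starRingEnd ℂ) (2⁻¹ : ℂ) = (2⁻¹ : ℂ) := by
      rw [map_inv₀]
      norm_num [Complex.ext_iff]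
    rw [hc]
    ring
  -- H ≤ -H†
  have hle1 : H ≤ -H.adjoint := by
    have hdomle : H.domain ≤ (-H.adjoint).domain := by
      intro a ha
      show a ∈ H.adjoint.domain
      refine mem_adjoint_domain_of_exists a ⟨-(H ⟨a, ha⟩), fun w => ?_⟩
      rw [inner_neg_left, hskewH ⟨a, ha⟩ w, neg_neg]
    refine ⟨hdomle, ?_⟩
    intro x y hxy
    have hval : H.adjoint ⟨(y : ℋ), y.2⟩ = -(H x) := by
      refine adjoint_apply_eq hdense' _ fun w => ?_
      rw [inner_neg_left, hskewH x w, neg_neg, hxy]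
    show H x = -(H.adjoint y)
    have : (⟨(y : ℋ), y.2⟩ : H.adjoint.domain) = y := rfl
    rw [← this, hval, neg_neg]
  -- -H† ≤ H
  have hle2 : -H.adjoint ≤ H := by
    have key : ∀ a : ℋ, ∀ ha : a ∈ H.adjoint.domain,
        U (H.adjoint ⟨a, ha⟩ + a) = a - H.adjoint ⟨a, ha⟩ := by
      intro a ha
      set v := H.adjoint ⟨a, ha⟩ with hv
      have h1 : ∀ t : ℋ, ⟪v + a, t⟫_ℂ = ⟪a - v, U t⟫_ℂ := by
        intro t
        have h2 : ⟪v, r t⟫_ℂ = ⟪a, H ⟨r t, hdomH t⟩⟫_ℂ :=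
          (adjoint_isFormalAdjoint hdense') ⟨a, ha⟩ ⟨r t, hdomH t⟩
        rw [happ t (hdomH t)] at h2
        rw [hrapp, hsapp] at h2
        rw [inner_smul_right, inner_smul_right, inner_add_right, inner_sub_right] at h2
        have h3 : ⟪v, t⟫_ℂ + ⟪v, U t⟫_ℂ = ⟪a, U t⟫_ℂ - ⟪a, t⟫_ℂ := by
          have := congrArg (fun z => (2 : ℂ) * z) h2
          rw [← mul_assoc, ← mul_assoc] at this
          norm_num at this
          linear_combination this
        rw [inner_add_left, inner_sub_left]
        linear_combination h3
      have h4 : ∀ t' : ℋ, ⟪U (v + a) - (a - v), t'⟫_ℂ = 0 := by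
        intro t'
        have h5 := h1 (U.symm t')
        rw [show U (U.symm t') = t' from U.apply_symm_apply t'] at h5
        have h6 : ⟪v + a, U.symm t'⟫_ℂ = ⟪U (v + a), t'⟫_ℂ := by
          conv_rhs => rw [show t' = U (U.symm t') from (U.apply_symm_apply t').symm]
          rw [hUU]
        rw [h6] at h5
        rw [inner_sub_left, h5, sub_self]
      have h7 := h4 (U (v + a) - (a - v))
      rw [inner_self_eq_zero] at h7
      linear_combination (norm := abel) h7
    have hdomle : (-H.adjoint).domain ≤ H.domain := by
      intro a ha
      have ha' : a ∈ H.adjoint.domain := ha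
      set v := H.adjoint ⟨a, ha'⟩ with hv
      have hUva := key a ha'
      have hra : r (v + a) = a := by
        rw [hrapp, hUva]
        have : (v + a) + (a - v) = (2 : ℂ) • a := by rw [two_smul]; abel
        rw [this, smul_smul, htwo, one_smul]
      have := hdomH (v + a)
      rwa [hra] at this
    refine ⟨hdomle, ?_⟩
    intro x y hxy
    have ha' : (x : ℋ) ∈ H.adjoint.domain := x.2
    set v := H.adjoint ⟨(x : ℋ), ha'⟩ with hv
    have hUva := key (x : ℋ) ha'
    have hra : r (v + (x : ℋ)) = (x : ℋ) := by
      rw [hrapp, hUva]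
      have : (v + (x : ℋ)) + ((x : ℋ) - v) = (2 : ℂ) • (x : ℋ) := by rw [two_smul]; abel
      rw [this, smul_smul, htwo, one_smul]
    have hsa : s (v + (x : ℋ)) = -v := by
      rw [hsapp, hUva]
      have : ((x : ℋ) - v) - (v + (x : ℋ)) = (2 : ℂ) • (-v) := by rw [two_smul]; abel
      rw [this, smul_smul, htwo, one_smul]
    have hHy : H y = s (v + (x : ℋ)) := happ' y _ (hra.trans hxy)
    show -(H.adjoint ⟨(x : ℋ), ha'⟩) = H y
    rw [hHy, hsa, hv]
  have hdomeq : H.domain = (-H.adjoint).domain := le_antisymm hle1.1 hle2.1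
  exact ⟨H, hdense', hBH, eq_of_le_of_domain_eq hle1 hdomeq⟩

section SkewAdj

variable {H : ℋ →ₗ.[ℂ] ℋ} (hd' : Dense (H.domain : Set ℋ)) (hsa : H = -H.adjoint)

include hsa in
lemma value_transfer {y : ℋ} (hy : y ∈ H.adjoint.domain) :
    ∃ hy' : y ∈ H.domain, H ⟨y, hy'⟩ = -(H.adjoint ⟨y, hy⟩) := by
  have hge : -H.adjoint ≤ H := le_of_eq hsa.symm
  have hy' : y ∈ H.domain := hge.1 hy
  refine ⟨hy', ?_⟩
  have := hge.2 (x := ⟨y, hy⟩) (y := ⟨y, hy'⟩) rfl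
  rw [← this]
  rfl

include hd' hsa in
lemma skew_of_skewAdj : Skew H := skew_of_le_neg_adjoint hd' (le_of_eq hsa)

include hd' hsa in
lemma isClosed_of_skewAdj : H.IsClosed := by
  have hs : Skew H := skew_of_skewAdj hd' hsa
  have hZ : (H.graph : Set (ℋ × ℋ)) =
      ⋂ w : H.domain, {p : ℋ × ℋ | ⟪p.2, (w : ℋ)⟫_ℂ + ⟪p.1, H w⟫_ℂ = 0} := by
    ext p
    simp only [Set.mem_iInter, Set.mem_setOf_eq, SetLike.mem_coe]
    constructor
    · intro hp w
      obtain ⟨z, hz1, hz2⟩ := H.mem_graph_iff.mp hp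
      rw [← hz1, ← hz2, hs z w]
      ring
    · intro hp
      have hmem : p.1 ∈ H.adjoint.domain :=
        mem_adjoint_domain_of_exists p.1 ⟨-p.2, fun w => by
          rw [inner_neg_left]; linear_combination -(hp w)⟩
      have hval : H.adjoint ⟨p.1, hmem⟩ = -p.2 :=
        adjoint_apply_eq hd' _ fun w => by
          rw [inner_neg_left]
          show -⟪p.2, (w : ℋ)⟫_ℂ = ⟪p.1, H w⟫_ℂ
          linear_combination -(hp w)
      obtain ⟨hy', hHval⟩ := value_transfer hsa hmem
      rw [H.mem_graph_iff]
      refine ⟨⟨p.1, hy'⟩, rfl, ?_⟩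
      rw [hHval, hval, neg_neg]
  unfold LinearPMap.IsClosed
  rw [hZ]
  refine isClosed_iInter fun w => isClosed_eq ?_ continuous_const
  exact (continuous_snd.inner continuous_const).add (continuous_fst.inner continuous_const)

include hd' hsa in
lemma rm_eq_top_of_skewAdj : rm H = ⊤ := by
  have hs : Skew H := skew_of_skewAdj hd' hsa
  have hc : IsClosed ((rm H : Submodule ℂ ℋ) : Set ℋ) :=
    isClosed_rm hs (isClosed_of_skewAdj hd' hsa)
  haveI : CompleteSpace (rm H) := hc.completeSpace_coe
  rw [← Submodule.orthogonal_eq_bot_iff]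
  rw [Submodule.eq_bot_iff]
  intro y hy
  obtain ⟨hy1, hy2⟩ := (mem_orth_rm_iff hd').mp hy
  obtain ⟨hy', hHval⟩ := value_transfer hsa hy1
  rw [hy2] at hHval
  have h0 : (⟨y, hy'⟩ : H.domain) + H ⟨y, hy'⟩ = 0 := by
    show y + H ⟨y, hy'⟩ = 0
    rw [hHval]; abel
  have h1 := norm_add_sq_skew hs ⟨y, hy'⟩
  rw [show ((⟨y, hy'⟩ : H.domain) : ℋ) + H ⟨y, hy'⟩ = 0 from h0] at h1
  simp only [norm_zero] at h1
  have : ‖y‖ = 0 := by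
    have := norm_nonneg (H ⟨y, hy'⟩)
    have := norm_nonneg y
    nlinarith [sq_nonneg ‖y‖, sq_nonneg ‖H ⟨y, hy'⟩‖]
  exact norm_eq_zero.mp this

include hd' hsa in
lemma rp_eq_top_of_skewAdj : rp H = ⊤ := by
  have hs : Skew H := skew_of_skewAdj hd' hsa
  have hc : IsClosed ((rp H : Submodule ℂ ℋ) : Set ℋ) :=
    isClosed_rp hs (isClosed_of_skewAdj hd' hsa)
  haveI : CompleteSpace (rp H) := hc.completeSpace_coe
  rw [← Submodule.orthogonal_eq_bot_iff]
  rw [Submodule.eq_bot_iff]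
  intro y hy
  obtain ⟨hy1, hy2⟩ := (mem_orth_rp_iff hd').mp hy
  obtain ⟨hy', hHval⟩ := value_transfer hsa hy1
  rw [hy2, neg_neg] at hHval
  have h0 : ((⟨y, hy'⟩ : H.domain) : ℋ) - H ⟨y, hy'⟩ = 0 := by
    rw [hHval]; show y - y = 0; abel
  have h1 := norm_sub_sq_skew hs ⟨y, hy'⟩
  rw [h0] at h1
  simp only [norm_zero] at h1
  have : ‖y‖ = 0 := by
    nlinarith [sq_nonneg ‖y‖, sq_nonneg ‖H ⟨y, hy'⟩‖, norm_nonneg y, norm_nonneg (H ⟨y, hy'⟩)]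
  exact norm_eq_zero.mp this

/-- The full Cayley transform of a skew-self-adjoint operator, as a unitary on `ℋ`. -/
noncomputable def cayFull : ℋ ≃ₗᵢ[ℂ] ℋ where
  toLinearEquiv :=
    (Submodule.topEquiv.symm.trans
      ((LinearEquiv.ofEq ⊤ (rm H) (rm_eq_top_of_skewAdj hd' hsa).symm).trans
        (((cay (skew_of_skewAdj hd' hsa)).toLinearEquiv).trans
          ((LinearEquiv.ofEq (rp H) ⊤ (rp_eq_top_of_skewAdj hd' hsa)).trans
            Submodule.topEquiv))))
  norm_map' := fun z =>
    (cay (skew_of_skewAdj hd' hsa)).norm_map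
      ((LinearEquiv.ofEq ⊤ (rm H) (rm_eq_top_of_skewAdj hd' hsa).symm) (Submodule.topEquiv.symm z))

lemma cayFull_apply {z : ℋ} (hz : z ∈ rm H) :
    cayFull hd' hsa z = ((cay (skew_of_skewAdj hd' hsa)) ⟨z, hz⟩ : ℋ) := rfl

lemma cayFull_key (x : H.domain) :
    cayFull hd' hsa ((x : ℋ) - H x) = (x : ℋ) + H x := by
  have hz : ((x : ℋ) - H x) ∈ rm H := mem_rm.mpr ⟨x, rfl⟩
  rw [cayFull_apply hd' hsa hz, cay_apply (skew_of_skewAdj hd' hsa) x hz]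

end SkewAdj

end Stmt7

open Stmt7 LinearPMap

set_option maxHeartbeats 2000000 in
/-- A skew-symmetric operator `H₀` has a skew-self-adjoint extension if and
only if its deficiency spaces `ker(1 − H₀*)` and `ker(1 + H₀*)` have the same Hilbert space
dimension, i.e. are isometrically isomorphic as Hilbert spaces. -/
theorem stmt_7 {ℋ : Type*}
    [NormedAddCommGroup ℋ] [InnerProductSpace ℂ ℋ] [CompleteSpace ℋ]
    (H₀ : ℋ →ₗ.[ℂ] ℋ)
    (hdense : Dense (H₀.domain : Set ℋ)) (hclosed : H₀.IsClosed)
    (hskew : H₀ ≤ -H₀.adjoint) :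
    (∃ H : ℋ →ₗ.[ℂ] ℋ, Dense (H.domain : Set ℋ) ∧ H₀ ≤ H ∧ H = -H.adjoint) ↔
      Nonempty
        ((LinearMap.ker (H₀.adjoint.domain.subtype - H₀.adjoint.toFun)) ≃ₗᵢ[ℂ]
          (LinearMap.ker (H₀.adjoint.domain.subtype + H₀.adjoint.toFun))) := by
  have hs : Skew H₀ := skew_of_le_neg_adjoint hdense hskew
  constructor
  · rintro ⟨H, hd', hle, hsa⟩
    set U := cayFull hd' hsa with hU
    have hfwd : ∀ y ∈ ((rm H₀)ᗮ : Submodule ℂ ℋ), U y ∈ ((rp H₀)ᗮ : Submodule ℂ ℋ) := by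
      intro y hy
      rw [Submodule.mem_orthogonal]
      intro u hu
      obtain ⟨x, hx⟩ := mem_rp.mp hu
      set x' : H.domain := ⟨(x : ℋ), hle.1 x.2⟩ with hx'
      have hval : H₀ x = H x' := hle.2 rfl
      have hu2 : u = (x' : ℋ) + H x' := by rw [← hx, ← hval]
      have hu3 : u = U ((x' : ℋ) - H x') := by rw [cayFull_key hd' hsa x', hu2]
      rw [hu3, U.inner_map_map]
      have hxx : ((x' : ℋ) - H x') = (x : ℋ) - H₀ x := by rw [← hval]
      rw [hxx]
      exact (Submodule.mem_orthogonal _ _).mp hy _ (mem_rm.mpr ⟨x, rfl⟩)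
    have hbwd : ∀ y ∈ ((rp H₀)ᗮ : Submodule ℂ ℋ), U.symm y ∈ ((rm H₀)ᗮ : Submodule ℂ ℋ) := by
      intro y hy
      rw [Submodule.mem_orthogonal]
      intro u hu
      obtain ⟨x, hx⟩ := mem_rm.mp hu
      set x' : H.domain := ⟨(x : ℋ), hle.1 x.2⟩ with hx'
      have hval : H₀ x = H x' := hle.2 rfl
      have hu2 : u = (x' : ℋ) - H x' := by rw [← hx, ← hval]
      have h3 : ⟪u, U.symm y⟫_ℂ = ⟪U u, y⟫_ℂ := by
        conv_rhs => rw [show y = U (U.symm y) from (U.apply_symm_apply y).symm]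
        rw [U.inner_map_map]
      rw [h3, hu2, cayFull_key hd' hsa x']
      have hxx : ((x' : ℋ) + H x') = (x : ℋ) + H₀ x := by rw [← hval]
      rw [hxx]
      exact (Submodule.mem_orthogonal _ _).mp hy _ (mem_rp.mpr ⟨x, rfl⟩)
    set eOrth : ((rm H₀)ᗮ : Submodule ℂ ℋ) ≃ₗᵢ[ℂ] ((rp H₀)ᗮ : Submodule ℂ ℋ) :=
      { toLinearEquiv :=
          { toFun := fun y => ⟨U (y : ℋ), hfwd _ y.2⟩
            map_add' := fun a b => by apply Subtype.ext; simp
            map_smul' := fun cc a => by apply Subtype.ext; simp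
            invFun := fun y => ⟨U.symm (y : ℋ), hbwd _ y.2⟩
            left_inv := fun a => by apply Subtype.ext; simp
            right_inv := fun a => by apply Subtype.ext; simp }
        norm_map' := fun y => U.norm_map (y : ℋ) }
    exact ⟨(kerM H₀ hdense).trans (eOrth.trans (kerP H₀ hdense).symm)⟩
  · rintro ⟨e⟩
    have hcm : IsClosed ((rm H₀ : Submodule ℂ ℋ) : Set ℋ) := isClosed_rm hs hclosed
    have hcp : IsClosed ((rp H₀ : Submodule ℂ ℋ) : Set ℋ) := isClosed_rp hs hclosed
    haveI : CompleteSpace (rm H₀) := hcm.completeSpace_coe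
    haveI : CompleteSpace (rp H₀) := hcp.completeSpace_coe
    set φ : ((rm H₀)ᗮ : Submodule ℂ ℋ) ≃ₗᵢ[ℂ] ((rp H₀)ᗮ : Submodule ℂ ℋ) :=
      (kerM H₀ hdense).symm.trans (e.trans (kerP H₀ hdense)) with hφ
    set c := cay hs with hc
    set P1 := Submodule.orthogonalProjectionOnto (rm H₀) with hP1
    set P2 := Submodule.orthogonalProjectionOnto ((rm H₀)ᗮ) with hP2
    set T : ℋ →ₗ[ℂ] ℋ :=
      (rp H₀).subtype ∘ₗ c.toLinearEquiv.toLinearMap ∘ₗ (P1 : ℋ →L[ℂ] rm H₀).toLinearMap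
        + ((rp H₀)ᗮ).subtype ∘ₗ φ.toLinearEquiv.toLinearMap
            ∘ₗ (P2 : ℋ →L[ℂ] ((rm H₀)ᗮ : Submodule ℂ ℋ)).toLinearMap with hT
    have hTapp : ∀ z : ℋ, T z = ((c (P1 z)) : ℋ) + ((φ (P2 z)) : ℋ) := fun z => rfl
    have hcross : ∀ z w : ℋ, ⟪((c (P1 z)) : ℋ), ((φ (P2 w)) : ℋ)⟫_ℂ = 0 := fun z w =>
      Submodule.inner_right_of_mem_orthogonal (c (P1 z)).2 (φ (P2 w)).2
    have hnorm : ∀ z : ℋ, ‖T z‖ = ‖z‖ := by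
      intro z
      have h1 : ‖T z‖ ^ 2 = ‖((c (P1 z)) : ℋ)‖ ^ 2 + ‖((φ (P2 z)) : ℋ)‖ ^ 2 := by
        rw [hTapp, @norm_add_sq ℂ, hcross z z]
        simp
      have h2 : ‖((c (P1 z)) : ℋ)‖ = ‖P1 z‖ := c.norm_map (P1 z)
      have h3 : ‖((φ (P2 z)) : ℋ)‖ = ‖P2 z‖ := φ.norm_map (P2 z)
      have h4 := Submodule.norm_sq_eq_add_norm_sq_projection z (rm H₀)
      rw [h2, h3] at h1
      rw [← hP1, ← hP2] at h4
      have h5 : ‖T z‖ ^ 2 = ‖z‖ ^ 2 := by rw [h1, h4]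
      nlinarith [norm_nonneg (T z), norm_nonneg z]
    have hinj : Function.Injective T := by
      intro a b hab
      have h0 : ‖a - b‖ = 0 := by
        rw [← hnorm (a - b), _root_.map_sub, hab, sub_self, norm_zero]
      rwa [norm_eq_zero, sub_eq_zero] at h0
    have hsurj : Function.Surjective T := by
      intro w
      set Q1 := Submodule.orthogonalProjectionOnto (rp H₀) with hQ1
      set Q2 := Submodule.orthogonalProjectionOnto ((rp H₀)ᗮ) with hQ2
      refine ⟨((c.symm (Q1 w)) : ℋ) + ((φ.symm (Q2 w)) : ℋ), ?_⟩
      have e1 : P1 (((c.symm (Q1 w)) : ℋ) + ((φ.symm (Q2 w)) : ℋ)) = c.symm (Q1 w) := by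
        rw [_root_.map_add]
        rw [Submodule.orthogonalProjectionOnto_mem_subspace_eq_self (c.symm (Q1 w))]
        rw [Submodule.orthogonalProjectionOnto_apply_of_mem_orthogonal (φ.symm (Q2 w)).2]
        rw [add_zero]
      have e2 : P2 (((c.symm (Q1 w)) : ℋ) + ((φ.symm (Q2 w)) : ℋ)) = φ.symm (Q2 w) := by
        rw [_root_.map_add]
        rw [Submodule.orthogonalProjectionOnto_mem_subspace_eq_self (φ.symm (Q2 w))]
        rw [Submodule.orthogonalProjectionOnto_apply_of_mem_orthogonal
          (Submodule.le_orthogonal_orthogonal _ (c.symm (Q1 w)).2)]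
        rw [zero_add]
      rw [hTapp, e1, e2, c.apply_symm_apply, φ.apply_symm_apply]
      exact Submodule.starProjection_add_starProjection_orthogonal (K := rp H₀) w
    set U : ℋ ≃ₗᵢ[ℂ] ℋ :=
      { toLinearEquiv := LinearEquiv.ofBijective T ⟨hinj, hsurj⟩
        norm_map' := hnorm } with hUdef
    have hUapp : ∀ z : ℋ, U z = T z := fun z => rfl
    have hUkey : ∀ x : H₀.domain, U ((x : ℋ) - H₀ x) = (x : ℋ) + H₀ x := by
      intro x
      have hmem : ((x : ℋ) - H₀ x) ∈ rm H₀ := mem_rm.mpr ⟨x, rfl⟩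
      have e1 : P1 ((x : ℋ) - H₀ x) = ⟨(x : ℋ) - H₀ x, hmem⟩ := by
        apply Subtype.ext
        exact Submodule.starProjection_eq_self_iff.mpr hmem
      have e2 : P2 ((x : ℋ) - H₀ x) = 0 :=
        Submodule.orthogonalProjectionOnto_apply_of_mem_orthogonal
          (Submodule.le_orthogonal_orthogonal _ hmem)
      rw [hUapp, hTapp, e1, e2, _root_.map_zero]
      rw [cay_apply hs x hmem]
      simp
    exact construct hdense U hUkey
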